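/- Let σx = !![0, 1; 1, 0], σy = !![0, −i; i, 0], σz = !![1, 0; 0, −1] be the Pauli matrices, I₂ the 2 × 2 identity, m ≥ 1, I_m the m × m identity, and D any m × m complex matrix. Define H₄ = (I₂ ⊗ σy ⊗ I₂) ⊗ I_m, H₅ = (I₂ ⊗ I₂ ⊗ σx) ⊗ I_m, H₆ = (I₂ ⊗ I₂ ⊗ σy) ⊗ I_m, H₈ = (I₂ ⊗ σz ⊗ σz) ⊗ I_m, H₉ = (I₂ ⊗ I₂ ⊗ σz) ⊗ D. Then ⁅⁅H₄, H₈⁆, ⁅⁅H₈, H₅⁆, ⁅H₆, H₉⁆⁆⁆ = (32 i) • ((I₂ ⊗ σy ⊗ I₂) ⊗ D). In particular, the resulting operator acts as σy on qubit 2, trivially (as the identity) on the ancillary qubit, and as D on the environment. -/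

import Mathlib

open Kronecker

private lemma sub_kron {I I' J J' : Type*} (A B : Matrix I I' ℂ) (E : Matrix J J' ℂ) :
    (A - B) ⊗ₖ E = A ⊗ₖ E - B ⊗ₖ E := by
  ext i j
  simp [Matrix.kroneckerMap_apply, Matrix.sub_apply, sub_mul]

private lemma lie_kron_one {I J : Type*} [Fintype I] [Fintype J] [DecidableEq J]
    (A B : Matrix I I ℂ) (E : Matrix J J ℂ) :
    ⁅A ⊗ₖ (1 : Matrix J J ℂ), B ⊗ₖ E⁆ = ⁅A, B⁆ ⊗ₖ E := by
  rw [Ring.lie_def, Ring.lie_def, ← Matrix.mul_kronecker_mul, ← Matrix.mul_kronecker_mul,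
    Matrix.one_mul, Matrix.mul_one, sub_kron]

theorem ancilla_generates_qubit_environment_coupling (m : ℕ) (hm : 1 ≤ m)
    (D : Matrix (Fin m) (Fin m) ℂ) :
    let σx : Matrix (Fin 2) (Fin 2) ℂ := !![0, 1; 1, 0]
    let σy : Matrix (Fin 2) (Fin 2) ℂ := !![0, -Complex.I; Complex.I, 0]
    let σz : Matrix (Fin 2) (Fin 2) ℂ := !![1, 0; 0, -1]
    let I2 : Matrix (Fin 2) (Fin 2) ℂ := 1
    let Im : Matrix (Fin m) (Fin m) ℂ := 1
    let H4 := (I2 ⊗ₖ σy ⊗ₖ I2) ⊗ₖ Im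
    let H5 := (I2 ⊗ₖ I2 ⊗ₖ σx) ⊗ₖ Im
    let H6 := (I2 ⊗ₖ I2 ⊗ₖ σy) ⊗ₖ Im
    let H8 := (I2 ⊗ₖ σz ⊗ₖ σz) ⊗ₖ Im
    let H9 := (I2 ⊗ₖ I2 ⊗ₖ σz) ⊗ₖ D
    ⁅⁅H4, H8⁆, ⁅⁅H8, H5⁆, ⁅H6, H9⁆⁆⁆ =
      ((32 : ℂ) * Complex.I) • ((I2 ⊗ₖ σy ⊗ₖ I2) ⊗ₖ D) := by
  intro σx σy σz I2 Im H4 H5 H6 H8 H9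
  have pyz : σy * σz = Complex.I • σx := by
    ext i j
    fin_cases i <;> fin_cases j <;>
      simp [σx, σy, σz, Matrix.mul_apply, Fin.sum_univ_two]
  have pzy : σz * σy = (-Complex.I) • σx := by
    ext i j
    fin_cases i <;> fin_cases j <;>
      simp [σx, σy, σz, Matrix.mul_apply, Fin.sum_univ_two]
  have pzx : σz * σx = Complex.I • σy := by
    ext i j
    fin_cases i <;> fin_cases j <;>
      simp [σx, σy, σz, Matrix.mul_apply, Fin.sum_univ_two]
  have pxz : σx * σz = (-Complex.I) • σy := by
    ext i j
    fin_cases i <;> fin_cases j <;>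
      simp [σx, σy, σz, Matrix.mul_apply, Fin.sum_univ_two]
  have pyx : σy * σx = (-Complex.I) • σz := by
    ext i j
    fin_cases i <;> fin_cases j <;>
      simp [σx, σy, σz, Matrix.mul_apply, Fin.sum_univ_two]
  have pxy : σx * σy = Complex.I • σz := by
    ext i j
    fin_cases i <;> fin_cases j <;>
      simp [σx, σy, σz, Matrix.mul_apply, Fin.sum_univ_two]
  have pzz : σz * σz = 1 := by
    ext i j
    fin_cases i <;> fin_cases j <;>
      simp [σx, σy, σz, Matrix.mul_apply, Fin.sum_univ_two]
  have k1 : ⁅(1 : Matrix (Fin 2) (Fin 2) ℂ) ⊗ₖ σy ⊗ₖ (1 : Matrix (Fin 2) (Fin 2) ℂ),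
      (1 : Matrix (Fin 2) (Fin 2) ℂ) ⊗ₖ σz ⊗ₖ σz⁆
      = ((2 : ℂ) * Complex.I) • ((1 : Matrix (Fin 2) (Fin 2) ℂ) ⊗ₖ σx ⊗ₖ σz) := by
    simp only [Ring.lie_def, ← Matrix.mul_kronecker_mul, Matrix.one_mul, Matrix.mul_one,
      pyz, pzy, Matrix.kronecker_smul, Matrix.smul_kronecker]
    rw [← sub_smul]; norm_num [two_mul]
  have k2 : ⁅(1 : Matrix (Fin 2) (Fin 2) ℂ) ⊗ₖ σz ⊗ₖ σz,
      (1 : Matrix (Fin 2) (Fin 2) ℂ) ⊗ₖ (1 : Matrix (Fin 2) (Fin 2) ℂ) ⊗ₖ σx⁆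
      = ((2 : ℂ) * Complex.I) • ((1 : Matrix (Fin 2) (Fin 2) ℂ) ⊗ₖ σz ⊗ₖ σy) := by
    simp only [Ring.lie_def, ← Matrix.mul_kronecker_mul, Matrix.one_mul, Matrix.mul_one,
      pzx, pxz, Matrix.kronecker_smul, Matrix.smul_kronecker]
    rw [← sub_smul]; norm_num [two_mul]
  have k3 : ⁅(1 : Matrix (Fin 2) (Fin 2) ℂ) ⊗ₖ (1 : Matrix (Fin 2) (Fin 2) ℂ) ⊗ₖ σy,
      (1 : Matrix (Fin 2) (Fin 2) ℂ) ⊗ₖ (1 : Matrix (Fin 2) (Fin 2) ℂ) ⊗ₖ σz⁆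
      = ((2 : ℂ) * Complex.I) • ((1 : Matrix (Fin 2) (Fin 2) ℂ) ⊗ₖ (1 : Matrix (Fin 2) (Fin 2) ℂ) ⊗ₖ σx)
      := by
    simp only [Ring.lie_def, ← Matrix.mul_kronecker_mul, Matrix.one_mul, Matrix.mul_one,
      pyz, pzy, Matrix.kronecker_smul, Matrix.smul_kronecker]
    rw [← sub_smul]; norm_num [two_mul]
  have k23 : ⁅(1 : Matrix (Fin 2) (Fin 2) ℂ) ⊗ₖ σz ⊗ₖ σy,
      (1 : Matrix (Fin 2) (Fin 2) ℂ) ⊗ₖ (1 : Matrix (Fin 2) (Fin 2) ℂ) ⊗ₖ σx⁆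
      = ((-2 : ℂ) * Complex.I) • ((1 : Matrix (Fin 2) (Fin 2) ℂ) ⊗ₖ σz ⊗ₖ σz) := by
    simp only [Ring.lie_def, ← Matrix.mul_kronecker_mul, Matrix.one_mul, Matrix.mul_one,
      pyx, pxy, Matrix.kronecker_smul, Matrix.smul_kronecker]
    rw [← sub_smul]; norm_num [two_mul]; ring_nf
  have kf : ⁅(1 : Matrix (Fin 2) (Fin 2) ℂ) ⊗ₖ σx ⊗ₖ σz,
      (1 : Matrix (Fin 2) (Fin 2) ℂ) ⊗ₖ σz ⊗ₖ σz⁆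
      = ((-2 : ℂ) * Complex.I) • ((1 : Matrix (Fin 2) (Fin 2) ℂ) ⊗ₖ σy ⊗ₖ (1 : Matrix (Fin 2) (Fin 2) ℂ))
      := by
    simp only [Ring.lie_def, ← Matrix.mul_kronecker_mul, Matrix.one_mul, Matrix.mul_one,
      pxz, pzx, pzz, Matrix.kronecker_smul, Matrix.smul_kronecker]
    rw [← sub_smul]; norm_num [two_mul]; ring_nf
  have e4 := lie_kron_one ((1 : Matrix (Fin 2) (Fin 2) ℂ) ⊗ₖ σy ⊗ₖ (1 : Matrix (Fin 2) (Fin 2) ℂ))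
    ((1 : Matrix (Fin 2) (Fin 2) ℂ) ⊗ₖ σz ⊗ₖ σz) (1 : Matrix (Fin m) (Fin m) ℂ)
  have e5 := lie_kron_one ((1 : Matrix (Fin 2) (Fin 2) ℂ) ⊗ₖ σz ⊗ₖ σz)
    ((1 : Matrix (Fin 2) (Fin 2) ℂ) ⊗ₖ (1 : Matrix (Fin 2) (Fin 2) ℂ) ⊗ₖ σx) (1 : Matrix (Fin m) (Fin m) ℂ)
  have e6 := lie_kron_one ((1 : Matrix (Fin 2) (Fin 2) ℂ) ⊗ₖ (1 : Matrix (Fin 2) (Fin 2) ℂ) ⊗ₖ σy)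
    ((1 : Matrix (Fin 2) (Fin 2) ℂ) ⊗ₖ (1 : Matrix (Fin 2) (Fin 2) ℂ) ⊗ₖ σz) D
  show ⁅⁅((1 : Matrix (Fin 2) (Fin 2) ℂ) ⊗ₖ σy ⊗ₖ (1 : Matrix (Fin 2) (Fin 2) ℂ)) ⊗ₖ (1 : Matrix (Fin m) (Fin m) ℂ),
      ((1 : Matrix (Fin 2) (Fin 2) ℂ) ⊗ₖ σz ⊗ₖ σz) ⊗ₖ (1 : Matrix (Fin m) (Fin m) ℂ)⁆,
    ⁅⁅((1 : Matrix (Fin 2) (Fin 2) ℂ) ⊗ₖ σz ⊗ₖ σz) ⊗ₖ (1 : Matrix (Fin m) (Fin m) ℂ),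
      ((1 : Matrix (Fin 2) (Fin 2) ℂ) ⊗ₖ (1 : Matrix (Fin 2) (Fin 2) ℂ) ⊗ₖ σx) ⊗ₖ (1 : Matrix (Fin m) (Fin m) ℂ)⁆,
     ⁅((1 : Matrix (Fin 2) (Fin 2) ℂ) ⊗ₖ (1 : Matrix (Fin 2) (Fin 2) ℂ) ⊗ₖ σy) ⊗ₖ (1 : Matrix (Fin m) (Fin m) ℂ),
      ((1 : Matrix (Fin 2) (Fin 2) ℂ) ⊗ₖ (1 : Matrix (Fin 2) (Fin 2) ℂ) ⊗ₖ σz) ⊗ₖ D⁆⁆⁆ =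
      ((32 : ℂ) * Complex.I) • (((1 : Matrix (Fin 2) (Fin 2) ℂ) ⊗ₖ σy ⊗ₖ (1 : Matrix (Fin 2) (Fin 2) ℂ)) ⊗ₖ D)
  letI : LieRing (Matrix (((Fin 2 × Fin 2) × Fin 2) × Fin m) (((Fin 2 × Fin 2) × Fin 2) × Fin m) ℂ) :=
    LieRing.ofAssociativeRing
  rw [e4, e5, e6, k1, k2, k3, Matrix.smul_kronecker, Matrix.smul_kronecker,
    Matrix.smul_kronecker, smul_lie, lie_smul, lie_smul, smul_lie,
    lie_kron_one, k23, Matrix.smul_kronecker, lie_smul, lie_smul,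
    lie_kron_one, kf, Matrix.smul_kronecker]
  rw [smul_smul, smul_smul, smul_smul, smul_smul, ← Matrix.smul_kronecker]
  rw [Matrix.smul_kronecker]
  congr 1
  simp [Complex.ext_iff]
  norm_num
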